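/- Let p : ℝ → ℝ be a probability density function and suppose y ↦ e^y p(y) is Lebesgue integrable. For ω ∈ ℝ set M(iω) := ∫_ℝ e^{iωy} p(y) dy and M(1 + iω) := ∫_ℝ e^{(1+iω)y} p(y) dy. Assume that ω ↦ Im(M(iω))/ω and ω ↦ Im(M(1+iω))/ω are both Lebesgue integrable on (0, ∞). Then ∫_ℝ |e^y − 1| p(y) dy = (2/π) ∫_0^∞ Re[ (M(1 + iω) − M(iω)) / (iω) ] dω. -/

import Mathlib

open MeasureTheory Real Set Filter Topology

section SiLemmas
open intervalIntegral

noncomputable def Si (x : ℝ) : ℝ := ∫ t in (0:ℝ)..x, Real.sin t / t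



lemma sinc_abs_le_one (t : ℝ) : |Real.sin t / t| ≤ 1 := by
  rcases eq_or_ne t 0 with h | h
  · simp [h]
  · rw [abs_div, div_le_one (abs_pos.2 h)]
    exact Real.abs_sin_le_abs

lemma sinc_meas : Measurable (fun t : ℝ => Real.sin t / t) :=
  Real.measurable_sin.div measurable_id

lemma sinc_intervalIntegrable (a b : ℝ) :
    IntervalIntegrable (fun t : ℝ => Real.sin t / t) volume a b := by
  rw [intervalIntegrable_iff]
  refine Integrable.mono' (g := fun _ : ℝ => (1:ℝ))
    (integrableOn_const measure_Ioc_lt_top.ne)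
    ((sinc_meas.aestronglyMeasurable).restrict)
    (Eventually.of_forall fun t => by
      rw [Real.norm_eq_abs]; exact sinc_abs_le_one t)

lemma abs_Si_le_abs (x : ℝ) : |Si x| ≤ |x| := by
  have := intervalIntegral.norm_integral_le_of_norm_le_const
    (a := 0) (b := x) (C := 1) (f := fun t : ℝ => Real.sin t / t)
    (fun t _ => by rw [Real.norm_eq_abs]; exact sinc_abs_le_one t)
  simpa [Si, Real.norm_eq_abs] using this

lemma Si_neg (x : ℝ) : Si (-x) = - Si x := by
  have h1 : (∫ t in (0:ℝ)..x, Real.sin (-t) / (-t)) = ∫ t in (-x)..(0:ℝ), Real.sin t / t := by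
    simpa using intervalIntegral.integral_comp_neg (a := 0) (b := x)
      (fun t : ℝ => Real.sin t / t)
  have h2 : (fun t : ℝ => Real.sin (-t) / (-t)) = fun t : ℝ => Real.sin t / t := by
    funext t; rw [Real.sin_neg, neg_div_neg_eq]
  rw [h2] at h1
  unfold Si
  rw [h1, intervalIntegral.integral_symm]

-- antiderivative of exp(-(u*t)) * sin t
lemma hasDerivAt_G (u t : ℝ) :
    HasDerivAt (fun t : ℝ => -(Real.exp (-(u*t)) * (Real.cos t + u * Real.sin t)) / (1+u^2))
      (Real.exp (-(u*t)) * Real.sin t) t := by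
  have h1 : HasDerivAt (fun t : ℝ => Real.exp (-(u*t))) (-u * Real.exp (-(u*t))) t := by
    have : HasDerivAt (fun t : ℝ => -(u*t)) (-u) t := by
      have h := ((hasDerivAt_id t).const_mul u).neg
      simp only [id, mul_one] at h
      exact h
    simpa [mul_comm, Function.comp_def] using (Real.hasDerivAt_exp (-(u*t))).comp t this
  have h2 : HasDerivAt (fun t : ℝ => Real.cos t + u * Real.sin t)
      (-Real.sin t + u * Real.cos t) t :=
    (Real.hasDerivAt_cos t).add ((Real.hasDerivAt_sin t).const_mul u)
  have h3 : HasDerivAt (fun t : ℝ => -(Real.exp (-(u*t)) * (Real.cos t + u * Real.sin t)) / (1+u^2))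
      (-(-u * Real.exp (-(u*t)) * (Real.cos t + u * Real.sin t)
        + Real.exp (-(u*t)) * (-Real.sin t + u * Real.cos t)) / (1+u^2)) t :=
    (h1.mul h2).neg.div_const (1+u^2)
  convert h3 using 1
  have hu : (1:ℝ) + u^2 ≠ 0 := by positivity
  field_simp
  ring

lemma integral_exp_mul_sin (u R : ℝ) :
    (∫ t in (0:ℝ)..R, Real.exp (-(u*t)) * Real.sin t)
      = (1 - Real.exp (-(u*R)) * (Real.cos R + u * Real.sin R)) / (1+u^2) := by
  have h := intervalIntegral.integral_eq_sub_of_hasDerivAt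
    (f := fun t : ℝ => -(Real.exp (-(u*t)) * (Real.cos t + u * Real.sin t)) / (1+u^2))
    (fun t _ => hasDerivAt_G u t)
    (Continuous.intervalIntegrable (by continuity) 0 R)
  rw [h]
  simp
  ring


lemma err_integrable {R : ℝ} (hR : 0 < R) :
    IntegrableOn (fun u : ℝ =>
      Real.exp (-(u*R)) * (Real.cos R + u * Real.sin R) / (1+u^2)) (Ioi 0) := by
  refine Integrable.mono' (g := fun u : ℝ => 2 * Real.exp (-R * u))
    ((exp_neg_integrableOn_Ioi 0 hR).const_mul 2) ?_ ?_
  · refine AEStronglyMeasurable.restrict (Continuous.aestronglyMeasurable ?_)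
    exact Continuous.div (by continuity) (by continuity) (fun u => by positivity)
  · filter_upwards [ae_restrict_mem measurableSet_Ioi] with u hu
    have hu0 : (0:ℝ) ≤ u := le_of_lt hu
    rw [Real.norm_eq_abs, abs_div, abs_mul]
    have h1 : |Real.cos R + u * Real.sin R| ≤ 1 + u := by
      calc |Real.cos R + u * Real.sin R| ≤ |Real.cos R| + |u * Real.sin R| := abs_add_le _ _
        _ ≤ 1 + u := by
            have := Real.abs_cos_le_one R
            have h2 : |u * Real.sin R| ≤ u := by
              rw [abs_mul, abs_of_nonneg hu0]
              exact mul_le_of_le_one_right hu0 (Real.abs_sin_le_one R)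
            linarith
    have h3 : (1:ℝ) + u ≤ 2 * (1 + u^2) := by nlinarith [sq_nonneg (u-1), sq_nonneg u]
    have h4 : |1 + u^2| = 1 + u^2 := abs_of_pos (by positivity)
    have h5 : |Real.exp (-(u*R))| = Real.exp (-R*u) := by
      rw [abs_of_pos (Real.exp_pos _)]; ring_nf
    rw [h5, h4, div_le_iff₀ (by positivity)]
    calc Real.exp (-R*u) * |Real.cos R + u * Real.sin R|
        ≤ Real.exp (-R*u) * (2 * (1+u^2)) := by
          apply mul_le_mul_of_nonneg_left (h1.trans h3) (le_of_lt (Real.exp_pos _))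
      _ = 2 * Real.exp (-R*u) * (1+u^2) := by ring

lemma Si_eq {R : ℝ} (hR : 0 < R) :
    Si R = π/2 - ∫ u in Ioi (0:ℝ),
      Real.exp (-(u*R)) * (Real.cos R + u * Real.sin R) / (1+u^2) := by
  -- Fubini
  have hprod : Integrable (fun z : ℝ × ℝ => Real.exp (-(z.2*z.1)) * Real.sin z.1)
      ((volume.restrict (Ioc 0 R)).prod (volume.restrict (Ioi 0))) := by
    have hmeas : AEStronglyMeasurable (fun z : ℝ × ℝ => Real.exp (-(z.2*z.1)) * Real.sin z.1)
        ((volume.restrict (Ioc 0 R)).prod (volume.restrict (Ioi 0))) := by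
      apply Continuous.aestronglyMeasurable
      exact (Real.continuous_exp.comp (continuous_snd.mul continuous_fst).neg).mul
        (Real.continuous_sin.comp continuous_fst)
    rw [MeasureTheory.integrable_prod_iff hmeas]
    constructor
    · filter_upwards [ae_restrict_mem measurableSet_Ioc] with t ht
      refine Integrable.mono' (g := fun u : ℝ => Real.exp (-t * u))
        (exp_neg_integrableOn_Ioi 0 ht.1) ?_ ?_
      · exact Continuous.aestronglyMeasurable
          ((Real.continuous_exp.comp ((continuous_id.mul continuous_const).neg)).mul
            continuous_const) |>.restrict
      · refine Eventually.of_forall fun u => ?_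
        rw [Real.norm_eq_abs, abs_mul, abs_of_pos (Real.exp_pos _)]
        have : Real.exp (-(u*t)) = Real.exp (-t*u) := by ring_nf
        rw [this]
        exact mul_le_of_le_one_right (le_of_lt (Real.exp_pos _)) (Real.abs_sin_le_one _)
    · refine Integrable.mono' (g := fun _ : ℝ => (1:ℝ))
        (integrableOn_const measure_Ioc_lt_top.ne) ?_ ?_
      · exact (hmeas.norm.integral_prod_right')
      · filter_upwards [ae_restrict_mem measurableSet_Ioc] with t ht
        rw [Real.norm_eq_abs, abs_of_nonneg (integral_nonneg fun u => norm_nonneg _)]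
        have hval : (∫ u in Ioi (0:ℝ), ‖Real.exp (-(u*t)) * Real.sin t‖)
            = |Real.sin t| * t⁻¹ := by
          have : ∀ u : ℝ, ‖Real.exp (-(u*t)) * Real.sin t‖
              = Real.exp (-(t*u)) * |Real.sin t| := by
            intro u
            rw [Real.norm_eq_abs, abs_mul, abs_of_pos (Real.exp_pos _), mul_comm u t]
          simp_rw [this]
          rw [MeasureTheory.integral_mul_const]
          have := integral_comp_mul_left_Ioi (fun x : ℝ => Real.exp (-x)) 0 ht.1
          simp only [mul_zero] at this
          rw [this, integral_exp_neg_Ioi_zero]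
          simp [mul_comm]
        rw [hval]
        have : |Real.sin t| * t⁻¹ ≤ |t| * t⁻¹ := by
          apply mul_le_mul_of_nonneg_right Real.abs_sin_le_abs (inv_nonneg.2 ht.1.le)
        rw [abs_of_pos ht.1] at this
        rw [mul_inv_cancel₀ (ne_of_gt ht.1)] at this
        exact this
  have hswap := MeasureTheory.integral_integral_swap
    (f := fun t u : ℝ => Real.exp (-(u*t)) * Real.sin t) hprod
  -- LHS of swap equals Si R
  have hL : (∫ t in Ioc (0:ℝ) R, ∫ u in Ioi (0:ℝ), Real.exp (-(u*t)) * Real.sin t) = Si R := by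
    rw [Si, intervalIntegral.integral_of_le (le_of_lt hR)]
    refine setIntegral_congr_fun measurableSet_Ioc fun t ht => ?_
    rw [MeasureTheory.integral_mul_const]
    have := integral_comp_mul_left_Ioi (fun x : ℝ => Real.exp (-x)) 0 ht.1
    simp only [mul_zero] at this
    simp_rw [show ∀ u : ℝ, -(u*t) = -(t*u) from fun u => by ring]
    rw [this, integral_exp_neg_Ioi_zero]
    simp [div_eq_inv_mul, mul_comm]
  -- RHS of swap
  have hRt : (∫ u in Ioi (0:ℝ), ∫ t in Ioc (0:ℝ) R, Real.exp (-(u*t)) * Real.sin t)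
      = ∫ u in Ioi (0:ℝ),
          (1 - Real.exp (-(u*R)) * (Real.cos R + u * Real.sin R)) / (1+u^2) := by
    refine setIntegral_congr_fun measurableSet_Ioi fun u _ => ?_
    rw [← intervalIntegral.integral_of_le (le_of_lt hR)]
    exact integral_exp_mul_sin u R
  rw [hL, hRt] at hswap
  rw [hswap]
  have hsplit : ∀ u : ℝ, (1 - Real.exp (-(u*R)) * (Real.cos R + u * Real.sin R)) / (1+u^2)
      = (1+u^2)⁻¹ - Real.exp (-(u*R)) * (Real.cos R + u * Real.sin R) / (1+u^2) := by
    intro u; field_simp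
  simp_rw [hsplit]
  rw [integral_sub (integrable_inv_one_add_sq.integrableOn) (err_integrable hR)]
  rw [integral_Ioi_inv_one_add_sq]
  simp [Real.arctan_zero]


lemma err_norm_le {R : ℝ} (hR : 0 < R) :
    |∫ u in Ioi (0:ℝ), Real.exp (-(u*R)) * (Real.cos R + u * Real.sin R) / (1+u^2)| ≤ 2 / R := by
  have hbound : ∀ u ∈ Ioi (0:ℝ),
      ‖Real.exp (-(u*R)) * (Real.cos R + u * Real.sin R) / (1+u^2)‖ ≤ 2 * Real.exp (-R * u) := by
    intro u hu
    have hu0 : (0:ℝ) ≤ u := le_of_lt hu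
    rw [Real.norm_eq_abs, abs_div, abs_mul]
    have h1 : |Real.cos R + u * Real.sin R| ≤ 1 + u := by
      calc |Real.cos R + u * Real.sin R| ≤ |Real.cos R| + |u * Real.sin R| := abs_add_le _ _
        _ ≤ 1 + u := by
            have := Real.abs_cos_le_one R
            have h2 : |u * Real.sin R| ≤ u := by
              rw [abs_mul, abs_of_nonneg hu0]
              exact mul_le_of_le_one_right hu0 (Real.abs_sin_le_one R)
            linarith
    have h3 : (1:ℝ) + u ≤ 2 * (1 + u^2) := by nlinarith [sq_nonneg (u-1), sq_nonneg u]
    have h4 : |1 + u^2| = 1 + u^2 := abs_of_pos (by positivity)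
    have h5 : |Real.exp (-(u*R))| = Real.exp (-R*u) := by
      rw [abs_of_pos (Real.exp_pos _)]; ring_nf
    rw [h5, h4, div_le_iff₀ (by positivity)]
    calc Real.exp (-R*u) * |Real.cos R + u * Real.sin R|
        ≤ Real.exp (-R*u) * (2 * (1+u^2)) := by
          apply mul_le_mul_of_nonneg_left (h1.trans h3) (le_of_lt (Real.exp_pos _))
      _ = 2 * Real.exp (-R*u) * (1+u^2) := by ring
  have hb : Integrable (fun u : ℝ => 2 * Real.exp (-R * u)) (volume.restrict (Ioi 0)) :=
    (exp_neg_integrableOn_Ioi 0 hR).const_mul 2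
  have := MeasureTheory.norm_integral_le_of_norm_le hb
    ((ae_restrict_iff' measurableSet_Ioi).2 (Eventually.of_forall hbound))
  rw [Real.norm_eq_abs] at this
  refine this.trans ?_
  rw [MeasureTheory.integral_const_mul]
  have h6 := integral_comp_mul_left_Ioi (fun x : ℝ => Real.exp (-x)) 0 hR
  simp only [mul_zero] at h6
  rw [show (fun u : ℝ => Real.exp (-R*u)) = fun u : ℝ => Real.exp (-(R*u)) from
    funext fun u => by ring_nf] at *
  rw [h6, integral_exp_neg_Ioi_zero]
  rw [smul_eq_mul, mul_one]
  rw [div_eq_mul_inv]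

lemma Si_tendsto_atTop : Tendsto Si atTop (𝓝 (π/2)) := by
  have h : ∀ᶠ R in atTop, |Si R - π/2| ≤ 2/R := by
    filter_upwards [eventually_gt_atTop (0:ℝ)] with R hR
    rw [Si_eq hR]
    rw [show π/2 - _ - π/2 = -(∫ u in Ioi (0:ℝ),
      Real.exp (-(u*R)) * (Real.cos R + u * Real.sin R) / (1+u^2)) by ring, abs_neg]
    exact err_norm_le hR
  have h2 : Tendsto (fun R : ℝ => 2/R) atTop (𝓝 0) :=
    tendsto_const_nhds.div_atTop tendsto_id
  have h3 : Tendsto (fun R => Si R - π/2) atTop (𝓝 0) :=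
    squeeze_zero_norm' (by simpa [Real.norm_eq_abs] using h) h2
  have := h3.add (tendsto_const_nhds (x := π/2))
  simpa using this

lemma abs_Si_le_four (x : ℝ) : |Si x| ≤ 4 := by
  have key : ∀ y : ℝ, 0 ≤ y → |Si y| ≤ 4 := by
    intro y hy
    rcases le_or_gt y 1 with h | h
    · have := abs_Si_le_abs y
      rw [abs_of_nonneg hy] at this
      linarith
    · have hy0 : 0 < y := lt_trans one_pos h
      rw [Si_eq hy0]
      have h1 := err_norm_le hy0
      have h2 : 2 / y ≤ 2 := by
        rw [div_le_iff₀ hy0]; nlinarith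
      have hπ : π ≤ 4 := by linarith [Real.pi_le_four]
      calc |π/2 - _| ≤ |π/2| + |∫ u in Ioi (0:ℝ),
            Real.exp (-(u*y)) * (Real.cos y + u * Real.sin y) / (1+u^2)| := abs_sub _ _
        _ ≤ 4 := by
            rw [abs_of_pos (by positivity : (0:ℝ) < π/2)]
            linarith
  rcases le_or_gt 0 x with h | h
  · exact key x h
  · have := key (-x) (by linarith)
    rw [Si_neg, abs_neg] at this
    exact this

end SiLemmas


lemma Si_continuous : Continuous Si :=
  intervalIntegral.continuous_primitive sinc_intervalIntegrable 0

/-- Model-free content of Proposition 3.1: for a log-return density `p`,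
`E[|e^Y - 1|] = (2/π) ∫_0^∞ Re[(M(1+iω) - M(iω))/(iω)] dω`,
where `M(iω)` and `M(1+iω)` are the indicated Fourier/moment transforms of `p`. -/
theorem abs_exp_sub_one_fourier (p : ℝ → ℝ)
    (hmeas : Measurable p) (hpos : ∀ᵐ y : ℝ, 0 ≤ p y)
    (hint : Integrable p) (hnorm : ∫ y : ℝ, p y = 1)
    (hexp : Integrable (fun y : ℝ => Real.exp y * p y))
    (M₀ M₁ : ℝ → ℂ)
    (hM₀ : ∀ ω : ℝ, M₀ ω = ∫ y : ℝ, Complex.exp (ω * Complex.I * y) * (p y : ℂ))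
    (hM₁ : ∀ ω : ℝ, M₁ ω = ∫ y : ℝ, Complex.exp ((1 + ω * Complex.I) * y) * (p y : ℂ))
    (hI₀ : IntegrableOn (fun ω : ℝ => (M₀ ω).im / ω) (Set.Ioi 0))
    (hI₁ : IntegrableOn (fun ω : ℝ => (M₁ ω).im / ω) (Set.Ioi 0)) :
    ∫ y : ℝ, |Real.exp y - 1| * p y
      = (2 / π) * ∫ ω in Set.Ioi (0 : ℝ), ((M₁ ω - M₀ ω) / (ω * Complex.I)).re := by
  -- the real integrand g
  set g : ℝ → ℝ := fun y => (Real.exp y - 1) * p y with hg_def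
  have hg_meas : Measurable g := (Real.measurable_exp.sub measurable_const).mul hmeas
  have hg_int : Integrable g := by
    have : g = fun y => Real.exp y * p y - p y := by funext y; simp [hg_def]; ring
    rw [this]; exact hexp.sub hint
  -- integrability of the complex integrands
  have hint₀ : ∀ ω : ℝ, Integrable (fun y : ℝ => Complex.exp (ω * Complex.I * y) * (p y : ℂ)) := by
    intro ω
    refine Integrable.mono' hint.norm ?_ (Eventually.of_forall fun y => ?_)
    · exact ((Complex.measurable_exp.comp
        ((measurable_const.mul Complex.measurable_ofReal))).mul
        (Complex.measurable_ofReal.comp hmeas)).aestronglyMeasurable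
    · rw [show ‖Complex.exp (↑ω * Complex.I * ↑y) * ((p y : ℝ) : ℂ)‖ = |p y| by
        simp [Complex.norm_exp, Complex.mul_re]]
      simp [Real.norm_eq_abs]
  have hexp_abs : Integrable (fun y : ℝ => Real.exp y * |p y|) :=
    hexp.norm.congr (Eventually.of_forall fun y => by
      simp only [Real.norm_eq_abs, abs_mul, abs_of_pos (Real.exp_pos y)])
  have hint₁ : ∀ ω : ℝ, Integrable
      (fun y : ℝ => Complex.exp ((1 + ω * Complex.I) * y) * (p y : ℂ)) := by
    intro ω
    refine Integrable.mono' hexp_abs ?_ (Eventually.of_forall fun y => ?_)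
    · exact ((Complex.measurable_exp.comp
        ((measurable_const.mul Complex.measurable_ofReal))).mul
        (Complex.measurable_ofReal.comp hmeas)).aestronglyMeasurable
    · rw [show ‖Complex.exp ((1 + ↑ω * Complex.I) * ↑y) * ((p y : ℝ) : ℂ)‖
          = Real.exp y * |p y| by
        simp [Complex.norm_exp, Complex.mul_re, Complex.add_re,
          Complex.add_im]]
  -- imaginary parts
  have hM₀im : ∀ ω : ℝ, (M₀ ω).im = ∫ y : ℝ, Real.sin (ω * y) * p y := by
    intro ω
    rw [hM₀ ω, ← RCLike.im_eq_complex_im, ← integral_im (hint₀ ω)]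
    exact integral_congr_ae (Eventually.of_forall fun y => by
      simp [RCLike.im_eq_complex_im, Complex.mul_im, Complex.exp_im, Complex.exp_re,
        Complex.mul_re])
  have hM₁im : ∀ ω : ℝ, (M₁ ω).im = ∫ y : ℝ, Real.exp y * Real.sin (ω * y) * p y := by
    intro ω
    rw [hM₁ ω, ← RCLike.im_eq_complex_im, ← integral_im (hint₁ ω)]
    exact integral_congr_ae (Eventually.of_forall fun y => by
      simp [RCLike.im_eq_complex_im, Complex.mul_im, Complex.exp_im, Complex.exp_re,
        Complex.mul_re, Complex.add_re, Complex.add_im])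
  -- the real function on (0,∞)
  set f : ℝ → ℝ := fun ω => (M₁ ω).im / ω - (M₀ ω).im / ω with hf_def
  have hf_int : IntegrableOn f (Ioi 0) := hI₁.sub hI₀
  -- f ω as an integral of g against the sinc kernel
  have hsin_int : ∀ ω : ℝ, Integrable (fun y : ℝ => Real.sin (ω*y) * p y) :=
    fun ω => (hint₀ ω).im.congr (Eventually.of_forall fun y => by
      simp [Complex.mul_im, Complex.exp_im, Complex.exp_re, Complex.mul_re])
  have hsin_int' : ∀ ω : ℝ, Integrable (fun y : ℝ => Real.exp y * Real.sin (ω*y) * p y) :=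
    fun ω => (hint₁ ω).im.congr (Eventually.of_forall fun y => by
      simp [Complex.mul_im, Complex.exp_im, Complex.exp_re, Complex.mul_re, Complex.add_re,
        Complex.add_im])
  have hfω : ∀ ω : ℝ, ω ≠ 0 → f ω = ∫ y : ℝ, g y * (Real.sin (ω*y) / ω) := by
    intro ω hω
    rw [hf_def]
    simp only [hM₀im, hM₁im]
    rw [div_sub_div_same, ← integral_sub (hsin_int' ω) (hsin_int ω), ← integral_div]
    exact integral_congr_ae (Eventually.of_forall fun y => by
      rw [hg_def]; field_simp)
  -- Fubini claim for truncated ω-integrals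
  have key : ∀ n : ℕ, (∫ ω in Ioc (((n:ℝ)+1))⁻¹ ((n:ℝ)+1), f ω)
      = ∫ y : ℝ, g y * (Si (((n:ℝ)+1) * y) - Si ((((n:ℝ)+1))⁻¹ * y)) := by
    intro n
    set R : ℝ := (n:ℝ)+1 with hR_def
    set ε : ℝ := R⁻¹ with hε_def
    have hR1 : (1:ℝ) ≤ R := by
      rw [hR_def]; exact le_add_of_nonneg_left (Nat.cast_nonneg n)
    have hR0 : 0 < R := lt_of_lt_of_le one_pos hR1
    have hε0 : 0 < ε := inv_pos.2 hR0
    have hRR : R * ε = 1 := mul_inv_cancel₀ (ne_of_gt hR0)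
    have hεR : ε ≤ R := by nlinarith [hε0]
    have h1 : (∫ ω in Ioc ε R, f ω)
        = ∫ ω in Ioc ε R, ∫ y : ℝ, g y * (Real.sin (ω*y) / ω) :=
      setIntegral_congr_fun measurableSet_Ioc fun ω hω =>
        hfω ω (ne_of_gt (lt_of_lt_of_le hε0 (le_of_lt hω.1)))
    have hker_meas : AEStronglyMeasurable (fun z : ℝ × ℝ => g z.2 * (Real.sin (z.1*z.2) / z.1))
        ((volume.restrict (Ioc ε R)).prod volume) :=
      ((hg_meas.comp measurable_snd).mul
        ((Real.measurable_sin.comp (measurable_fst.mul measurable_snd)).div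
          measurable_fst)).aestronglyMeasurable
    have hbnd : ∀ ω ∈ Ioc ε R, ∀ y : ℝ, ‖Real.sin (ω*y) / ω‖ ≤ ε⁻¹ := by
      intro ω hω y
      rw [Real.norm_eq_abs, abs_div, abs_of_pos (lt_of_lt_of_le hε0 (le_of_lt hω.1))]
      have := div_le_div₀ (zero_le_one) (Real.abs_sin_le_one (ω*y)) hε0 (le_of_lt hω.1)
      rwa [one_div] at this
    have hprod : Integrable (fun z : ℝ × ℝ => g z.2 * (Real.sin (z.1*z.2) / z.1))
        ((volume.restrict (Ioc ε R)).prod volume) := by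
      refine (MeasureTheory.integrable_prod_iff hker_meas).2 ⟨?_, ?_⟩
      · filter_upwards [ae_restrict_mem measurableSet_Ioc] with ω hω
        have := hg_int.bdd_mul (c := ε⁻¹)
          ((Real.measurable_sin.comp (measurable_const.mul measurable_id)).div
            measurable_const).aestronglyMeasurable
          (Eventually.of_forall fun y => hbnd ω hω y)
        exact this.congr (Eventually.of_forall fun y => mul_comm _ _)
      · refine Integrable.mono' (g := fun _ : ℝ => ε⁻¹ * ∫ y : ℝ, |g y|)
          (integrableOn_const measure_Ioc_lt_top.ne)
          (hker_meas.norm.integral_prod_right') ?_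
        filter_upwards [ae_restrict_mem measurableSet_Ioc] with ω hω
        rw [Real.norm_eq_abs, abs_of_nonneg (integral_nonneg fun y => norm_nonneg _)]
        calc (∫ y : ℝ, ‖g y * (Real.sin (ω*y) / ω)‖)
            ≤ ∫ y : ℝ, ε⁻¹ * |g y| := by
              refine integral_mono_of_nonneg (Eventually.of_forall fun y => norm_nonneg _)
                (hg_int.abs.const_mul _) (Eventually.of_forall fun y => ?_)
              simp only [Real.norm_eq_abs, abs_mul, mul_comm (ε⁻¹)]
              exact mul_le_mul_of_nonneg_left (hbnd ω hω y) (abs_nonneg _)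
          _ = ε⁻¹ * ∫ y : ℝ, |g y| := by rw [MeasureTheory.integral_const_mul]
    have hswap := MeasureTheory.integral_integral_swap
      (f := fun ω y : ℝ => g y * (Real.sin (ω*y) / ω)) hprod
    have hinner : ∀ y : ℝ, (∫ ω in Ioc ε R, g y * (Real.sin (ω*y) / ω))
        = g y * (Si (R*y) - Si (ε*y)) := by
      intro y
      rw [MeasureTheory.integral_const_mul]
      congr 1
      rcases eq_or_ne y 0 with hy | hy
      · simp [hy, Si]
      · rw [← intervalIntegral.integral_of_le hεR]
        have hcong : Set.EqOn (fun ω : ℝ => Real.sin (ω*y) / ω)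
            (fun ω : ℝ => y * ((fun t : ℝ => Real.sin t / t) (ω*y))) (Set.uIcc ε R) := by
          intro ω hω
          have hω0 : ω ≠ 0 := by
            rw [Set.uIcc_of_le hεR] at hω
            exact ne_of_gt (lt_of_lt_of_le hε0 hω.1)
          field_simp
        rw [intervalIntegral.integral_congr hcong, intervalIntegral.integral_const_mul,
          intervalIntegral.integral_comp_mul_right (fun t : ℝ => Real.sin t / t) hy,
          smul_eq_mul, ← mul_assoc, mul_inv_cancel₀ hy, one_mul]
        simp only [Si]
        exact (intervalIntegral.integral_interval_sub_left
          (sinc_intervalIntegrable 0 (R*y)) (sinc_intervalIntegrable 0 (ε*y))).symm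
    rw [h1, hswap]
    exact integral_congr_ae (Eventually.of_forall hinner)
  -- convergence of the ω-side
  have hsets_mono : Monotone (fun n : ℕ => Ioc (((n:ℝ)+1))⁻¹ ((n:ℝ)+1)) := by
    intro m n hmn
    have h1 : ((m:ℝ)+1) ≤ (n:ℝ)+1 := by
      have : (m:ℝ) ≤ (n:ℝ) := Nat.cast_le.2 hmn
      linarith
    exact Ioc_subset_Ioc (inv_anti₀ (by positivity) h1) h1
  have hunion : (⋃ n : ℕ, Ioc (((n:ℝ)+1))⁻¹ ((n:ℝ)+1)) = Ioi (0:ℝ) := by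
    ext x
    simp only [mem_iUnion, mem_Ioc, mem_Ioi]
    constructor
    · rintro ⟨n, h1, _⟩
      exact lt_trans (by positivity) h1
    · intro hx
      obtain ⟨n, hn⟩ := exists_nat_ge (max x⁻¹ x)
      refine ⟨n, ?_, ?_⟩
      · have h2 : x⁻¹ < (n:ℝ)+1 :=
          lt_of_le_of_lt ((le_max_left _ _).trans hn) (lt_add_one _)
        have h3 := inv_strictAnti₀ (inv_pos.2 hx) h2
        rwa [inv_inv] at h3
      · exact le_trans ((le_max_right _ _).trans hn) (le_of_lt (lt_add_one _))
  have hT1 : Tendsto (fun n : ℕ => ∫ ω in Ioc (((n:ℝ)+1))⁻¹ ((n:ℝ)+1), f ω) atTop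
      (𝓝 (∫ ω in Ioi (0:ℝ), f ω)) := by
    have := MeasureTheory.tendsto_setIntegral_of_monotone
      (fun n : ℕ => measurableSet_Ioc) hsets_mono (by rw [hunion]; exact hf_int)
    rwa [hunion] at this
  -- convergence of the y-side
  have hSi0 : Si 0 = 0 := by simp [Si]
  have hT2 : Tendsto (fun n : ℕ => ∫ y : ℝ, g y * (Si (((n:ℝ)+1) * y) - Si ((((n:ℝ)+1))⁻¹ * y)))
      atTop (𝓝 (∫ y : ℝ, (π/2) * (|Real.exp y - 1| * p y))) := by
    refine MeasureTheory.tendsto_integral_of_dominated_convergence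
      (bound := fun y => 8 * |g y|) (fun n => ?_) (hg_int.abs.const_mul 8) (fun n => ?_) ?_
    · exact (hg_meas.mul
        (((Si_continuous.comp (continuous_const.mul continuous_id)).sub
          (Si_continuous.comp (continuous_const.mul continuous_id))).measurable)).aestronglyMeasurable
    · refine Eventually.of_forall fun y => ?_
      rw [Real.norm_eq_abs, abs_mul]
      have h1 : |Si (((n:ℝ)+1) * y) - Si ((((n:ℝ)+1))⁻¹ * y)| ≤ 8 := by
        calc |Si (((n:ℝ)+1) * y) - Si ((((n:ℝ)+1))⁻¹ * y)|
            ≤ |Si (((n:ℝ)+1) * y)| + |Si ((((n:ℝ)+1))⁻¹ * y)| := abs_sub _ _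
          _ ≤ 8 := by linarith [abs_Si_le_four (((n:ℝ)+1) * y), abs_Si_le_four ((((n:ℝ)+1))⁻¹ * y)]
      calc |g y| * |Si (((n:ℝ)+1) * y) - Si ((((n:ℝ)+1))⁻¹ * y)|
          ≤ |g y| * 8 := mul_le_mul_of_nonneg_left h1 (abs_nonneg _)
        _ = 8 * |g y| := mul_comm _ _
    · refine Eventually.of_forall fun y => ?_
      have hεlim : Tendsto (fun n : ℕ => Si ((((n:ℝ)+1))⁻¹ * y)) atTop (𝓝 0) := by
        have hb : Tendsto (fun n : ℕ => (((n:ℝ)+1))⁻¹ * y) atTop (𝓝 0) := by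
          have := tendsto_one_div_add_atTop_nhds_zero_nat (𝕜 := ℝ)
          have h2 := this.mul_const y
          rw [zero_mul] at h2
          refine h2.congr fun n => by rw [one_div]
        have := (Si_continuous.tendsto 0).comp hb
        rwa [hSi0] at this
      rcases lt_trichotomy y 0 with hy | hy | hy
      · -- y < 0
        have hRlim : Tendsto (fun n : ℕ => Si (((n:ℝ)+1) * y)) atTop (𝓝 (-(π/2))) := by
          have hb : Tendsto (fun n : ℕ => ((n:ℝ)+1) * (-y)) atTop atTop :=
            Tendsto.atTop_mul_const (by linarith)
              (tendsto_atTop_add_const_right _ _ tendsto_natCast_atTop_atTop)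
          have h2 := Si_tendsto_atTop.comp hb
          have h3 : ∀ n : ℕ, Si (((n:ℝ)+1) * y) = - Si (((n:ℝ)+1) * (-y)) := by
            intro n
            rw [show ((n:ℝ)+1) * y = -(((n:ℝ)+1) * (-y)) by ring, Si_neg]
          rw [show -(π/2) = -(π/2) from rfl]
          simpa [h3] using h2.neg
        have hlim := (tendsto_const_nhds (x := g y)).mul (hRlim.sub hεlim)
        rw [sub_zero] at hlim
        convert hlim using 2
        rw [hg_def]
        have habs : |Real.exp y - 1| = -(Real.exp y - 1) := by
          rw [abs_of_nonpos]
          have := Real.exp_lt_one_iff.2 hy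
          linarith
        rw [habs]; ring
      · -- y = 0
        subst hy
        have : ∀ n : ℕ, g 0 * (Si (((n:ℝ)+1) * 0) - Si ((((n:ℝ)+1))⁻¹ * 0)) = 0 := by
          intro n; simp [hg_def]
        rw [show (π/2) * (|Real.exp 0 - 1| * p 0) = 0 by simp]
        exact tendsto_const_nhds.congr fun n => (this n).symm
      · -- y > 0
        have hRlim : Tendsto (fun n : ℕ => Si (((n:ℝ)+1) * y)) atTop (𝓝 (π/2)) := by
          have hb : Tendsto (fun n : ℕ => ((n:ℝ)+1) * y) atTop atTop :=
            Tendsto.atTop_mul_const hy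
              (tendsto_atTop_add_const_right _ _ tendsto_natCast_atTop_atTop)
          exact Si_tendsto_atTop.comp hb
        have hlim := (tendsto_const_nhds (x := g y)).mul (hRlim.sub hεlim)
        rw [sub_zero] at hlim
        convert hlim using 2
        rw [hg_def]
        have habs : |Real.exp y - 1| = Real.exp y - 1 := by
          rw [abs_of_nonneg]
          have := Real.one_le_exp (le_of_lt hy)
          linarith
        rw [habs]; ring
  -- identify limits
  have hmain : (∫ ω in Ioi (0:ℝ), f ω) = ∫ y : ℝ, (π/2) * (|Real.exp y - 1| * p y) :=
    tendsto_nhds_unique (hT1.congr key) hT2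
  have hre : (∫ ω in Ioi (0:ℝ), ((M₁ ω - M₀ ω) / (ω * Complex.I)).re)
      = ∫ ω in Ioi (0:ℝ), f ω := by
    refine setIntegral_congr_fun measurableSet_Ioi fun ω hω => ?_
    have hω0 : (ω:ℝ) ≠ 0 := ne_of_gt hω
    rw [hf_def]
    rw [Complex.div_re]
    simp [Complex.normSq_apply, Complex.sub_im]
    field_simp
  rw [hre, hmain, MeasureTheory.integral_const_mul]
  rw [← mul_assoc]
  rw [show (2/π) * (π/2) = 1 by field_simp]
  rw [one_mul]
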